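/- Define u₀(t) = t and u_{k+1}(t) = 2^{u_k(t)} − 1. Then for every t ∈ (0,1), the series ∑_{k=0}^∞ u_k(t) converges. -/

import Mathlib

noncomputable def u : ℕ → ℝ → ℝ
  | 0, t => t
  | k + 1, t => (2:ℝ) ^ (u k t) - 1

lemma two_rpow_eq (x : ℝ) : (2:ℝ) ^ x = Real.exp (x * Real.log 2) := by
  rw [Real.rpow_def_of_pos (by norm_num)]; ring_nf

lemma key_ineq {a x : ℝ} (ha : 0 < a) (hx : 0 ≤ x) (hxa : x ≤ a) :
    (2:ℝ) ^ x - 1 ≤ (x / a) * ((2:ℝ) ^ a - 1) := by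
  have hs0 : 0 ≤ x / a := div_nonneg hx ha.le
  have hs1 : x / a ≤ 1 := (div_le_one ha).2 hxa
  have hconv := convexOn_exp.2 (Set.mem_univ 0) (Set.mem_univ (a * Real.log 2))
    (by linarith : (0:ℝ) ≤ 1 - x / a) hs0 (by ring)
  simp only [smul_eq_mul] at hconv
  have hx' : (1 - x / a) * 0 + (x / a) * (a * Real.log 2) = x * Real.log 2 := by
    field_simp; ring
  rw [hx'] at hconv
  rw [two_rpow_eq, two_rpow_eq]
  simp [Real.exp_zero] at hconv
  nlinarith [hconv]

lemma strict_ineq {a : ℝ} (h0 : 0 < a) (h1 : a < 1) : (2:ℝ) ^ a - 1 < a := by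
  have hlog : (0:ℝ) < Real.log 2 := Real.log_pos (by norm_num)
  have hconv := strictConvexOn_exp.2 (Set.mem_univ 0) (Set.mem_univ (Real.log 2))
    (ne_of_lt hlog) (by linarith : (0:ℝ) < 1 - a) h0 (by ring)
  simp only [smul_eq_mul] at hconv
  have hx' : (1 - a) * 0 + a * Real.log 2 = a * Real.log 2 := by ring
  rw [hx'] at hconv
  rw [two_rpow_eq]
  have h2 : Real.exp (Real.log 2) = 2 := Real.exp_log (by norm_num)
  rw [Real.exp_zero, h2] at hconv
  linarith

lemma u_mem {t : ℝ} (ht : t ∈ Set.Ioo (0:ℝ) 1) (k : ℕ) :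
    0 < u k t ∧ u k t < 1 := by
  induction k with
  | zero => exact ⟨ht.1, ht.2⟩
  | succ k ih =>
    constructor
    · have : (1:ℝ) < (2:ℝ) ^ (u k t) := by
        rw [show (1:ℝ) = (2:ℝ) ^ (0:ℝ) by simp]
        exact Real.rpow_lt_rpow_left_iff (by norm_num) |>.2 ih.1
      simpa [u] using sub_pos.2 this
    · have : (2:ℝ) ^ (u k t) < (2:ℝ) ^ (1:ℝ) := by
        exact Real.rpow_lt_rpow_left_iff (by norm_num) |>.2 ih.2
      rw [Real.rpow_one] at this
      simp only [u]; linarith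

theorem stmt8 (t : ℝ) (ht : t ∈ Set.Ioo (0:ℝ) 1) :
    Summable (fun k : ℕ => u k t) := by
  set a := u 1 t with ha_def
  obtain ⟨ha0, ha1⟩ := u_mem ht 1
  set r := ((2:ℝ) ^ a - 1) / a with hr_def
  have hr0 : 0 ≤ r := by
    have := (u_mem ht 2).1
    have h2 : u 2 t = (2:ℝ) ^ a - 1 := rfl
    exact div_nonneg (by linarith [h2 ▸ this]) ha0.le
  have hr1 : r < 1 := (div_lt_one ha0).2 (strict_ineq ha0 ha1)
  have hbound : ∀ k : ℕ, u (k + 1) t ≤ a * r ^ k := by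
    intro k
    induction k with
    | zero => simp [ha_def]
    | succ k ih =>
      have hle_a : u (k + 1) t ≤ a := by
        calc u (k + 1) t ≤ a * r ^ k := ih
          _ ≤ a * 1 := by
              exact mul_le_mul_of_nonneg_left (pow_le_one₀ hr0 hr1.le) ha0.le
          _ = a := mul_one a
      have hpos := (u_mem ht (k + 1)).1
      have := key_ineq ha0 hpos.le hle_a
      have heq : u (k + 2) t = (2:ℝ) ^ (u (k+1) t) - 1 := rfl
      calc u (k + 2) t = (2:ℝ) ^ (u (k+1) t) - 1 := heq
        _ ≤ (u (k+1) t / a) * ((2:ℝ) ^ a - 1) := this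
        _ = u (k+1) t * r := by rw [hr_def]; ring
        _ ≤ (a * r ^ k) * r := by
            exact mul_le_mul_of_nonneg_right ih hr0
        _ = a * r ^ (k + 1) := by ring
  have hsum : Summable (fun k : ℕ => u (k + 1) t) := by
    apply Summable.of_nonneg_of_le (fun k => (u_mem ht (k+1)).1.le) hbound
    exact (summable_geometric_of_lt_one hr0 hr1).mul_left a
  exact (summable_nat_add_iff 1).mp hsum
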